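/- Consider a finite tree T = (V,E) with positive edge weights μ_e and tree metric d, a finite state space R with r elements, a probability distribution π on R, and the Markov model in which a root state is drawn from π and the transition matrix M(e)_{xy} = π_x + (1−π_x)e^{−μ_e} if x = y, and π_y(1−e^{−μ_e}) otherwise, is applied independently along each edge directed away from the root. Let q_∞ = Σ_{x∈R} π_x² and p_∞ = 1 − q_∞. Then for any two leaves a, b: P[σ_a = σ_b] = q_∞ + p_∞·e^{−d(a,b)}; equivalently, E[p_∞^{−1}(1{σ_a = σ_b} − q_∞)] = e^{−d(a,b)}. -/
import Mathlib


open scoped Classical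
open Real

noncomputable section

namespace RAS

variable {V : Type}

/-- The canonical path (as a walk) between two vertices of a tree. -/
def tpath (G : SimpleGraph V) [DecidableEq V] (hG : G.IsTree) (u v : V) : G.Walk u v :=
  ((Classical.choice (hG.isConnected.preconnected u v)).toPath : G.Path u v).1

/-- Tree metric: sum of edge weights along the path. -/
def tdist (G : SimpleGraph V) [DecidableEq V] (hG : G.IsTree) (w : Sym2 V → ℝ) (u v : V) : ℝ :=
  ((tpath G hG u v).edges.map w).sum

/-- Edges of the canonical path. -/
def pathEdges (G : SimpleGraph V) [DecidableEq V] (hG : G.IsTree) (u v : V) :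
    List (Sym2 V) :=
  (tpath G hG u v).edges

/-- A leaf is a vertex of degree 1. -/
def IsLeaf (G : SimpleGraph V) (v : V) : Prop := (G.neighborSet v).ncard = 1

/-- A symmetric edge factor depending on whether the endpoint states agree. -/
def agreeIf {α : Type} (σ : V → α) (A B : ℝ) : Sym2 V → ℝ :=
  Sym2.lift ⟨fun u v => if σ u = σ v then A else B, fun u v => by
    simp only []
    by_cases h : σ u = σ v
    · rw [if_pos h, if_pos h.symm]
    · rw [if_neg h, if_neg (fun hh => h hh.symm)]⟩

/-- Probability mass function of the `r`-state Poisson model on a weighted tree. -/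
def poissonPMF (G : SimpleGraph V) [Fintype V] [DecidableEq V]
    (w : Sym2 V → ℝ) (r : ℕ) (σ : V → Fin r) : ℝ :=
  (r : ℝ)⁻¹ * ∏ e ∈ (Set.toFinite G.edgeSet).toFinset,
      agreeIf σ ((r : ℝ)⁻¹ + (1 - (r : ℝ)⁻¹) * exp (-(w e)))
        ((r : ℝ)⁻¹ * (1 - exp (-(w e)))) e

/-- Probability of an event under a pmf on a finite configuration space. -/
def fprob {Ω : Type} [Fintype Ω] (p : Ω → ℝ) (A : Set Ω) : ℝ :=
  ∑ ω : Ω, if ω ∈ A then p ω else 0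

end RAS

namespace RAS

variable {V : Type}

/-- The parent of `v` when the tree is rooted at `ρ`: the next vertex on the
path from `v` to `ρ` (equal to `v` itself when `v = ρ`). -/
def parent (G : SimpleGraph V) [DecidableEq V] (hG : G.IsTree) (ρ v : V) : V :=
  (tpath G hG v ρ).getVert 1

/-- Probability mass function of the Markov model on a weighted tree with root
distribution `pp` and transition matrices `M(e)_{xy} = pp_x + (1-pp_x)e^{-μ_e}`
(if `x = y`) and `pp_y (1-e^{-μ_e})` (otherwise), applied along the edges
directed away from the root `ρ`. -/
def rootedPMF {R : Type} [Fintype R] (G : SimpleGraph V) [Fintype V] [DecidableEq V]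
    (hG : G.IsTree) (w : Sym2 V → ℝ) (pp : R → ℝ) (ρ : V) (σ : V → R) : ℝ :=
  pp (σ ρ) * ∏ v ∈ Finset.univ.erase ρ,
    (if σ v = σ (parent G hG ρ v)
      then pp (σ v) + (1 - pp (σ v)) * exp (-(w s(parent G hG ρ v, v)))
      else pp (σ v) * (1 - exp (-(w s(parent G hG ρ v, v)))))

end RAS


namespace RASProof
open RAS SimpleGraph

open RAS SimpleGraph
variable {V : Type} [DecidableEq V] {G : SimpleGraph V} (hG : G.IsTree)

lemma tpath_isPath (u v : V) : (tpath G hG u v).IsPath :=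
  ((Classical.choice (hG.isConnected.preconnected u v)).toPath).2
lemma tpath_eq {u v : V} (q : G.Walk u v) (hq : q.IsPath) : tpath G hG u v = q :=
  congrArg Subtype.val
    (hG.IsAcyclic.path_unique ⟨tpath G hG u v, tpath_isPath hG u v⟩ ⟨q, hq⟩)
lemma tpath_self (u : V) : tpath G hG u u = Walk.nil :=
  tpath_eq hG _ (Walk.IsPath.nil)

lemma parent_self (u : V) : parent G hG u u = u := by
  unfold parent; rw [tpath_self hG]; rfl
lemma tpath_spec {ρ v : V} (h : v ≠ ρ) :
    ∃ hadj : G.Adj v (parent G hG ρ v),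
      tpath G hG v ρ = Walk.cons hadj (tpath G hG (parent G hG ρ v) ρ) ∧
      v ∉ (tpath G hG (parent G hG ρ v) ρ).support := by
  obtain ⟨u, hadj, q, hq⟩ := Walk.exists_eq_cons_of_ne h (tpath G hG v ρ)
  have hip := tpath_isPath hG v ρ
  rw [hq, Walk.cons_isPath_iff] at hip
  have hqe : tpath G hG u ρ = q := tpath_eq hG q hip.1
  have hu : parent G hG ρ v = u := by
    unfold parent; rw [hq, Walk.getVert_cons_succ, Walk.getVert_zero]
  rw [hu, hqe]
  exact ⟨hadj, hq, hip.2⟩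
lemma parent_eq_of {ρ v u : V} (hadj : G.Adj v u) (hs : v ∉ (tpath G hG u ρ).support) :
    parent G hG ρ v = u := by
  have hp : (Walk.cons hadj (tpath G hG u ρ)).IsPath :=
    (Walk.cons_isPath_iff _ _).2 ⟨tpath_isPath hG u ρ, hs⟩
  have h2 := tpath_eq hG _ hp
  unfold parent; rw [h2, Walk.getVert_cons_succ, Walk.getVert_zero]

-- NEW PART
lemma mem_support_reroot {x y u v : V} (hxy : G.Adj x y) (hvx : v ≠ x) (hvy : v ≠ y) :
    v ∈ (tpath G hG u x).support ↔ v ∈ (tpath G hG u y).support := by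
  by_cases hx : x ∈ (tpath G hG u y).support
  · have hty := tpath_isPath hG u y
    have htake : tpath G hG u x = (tpath G hG u y).takeUntil x hx :=
      tpath_eq hG _ (hty.takeUntil hx)
    have hsingle : tpath G hG x y = Walk.cons hxy Walk.nil :=
      tpath_eq hG _ (by simp [Walk.cons_isPath_iff, hxy.ne])
    have hdrop : (tpath G hG u y).dropUntil x hx = Walk.cons hxy Walk.nil := by
      rw [← tpath_eq hG ((tpath G hG u y).dropUntil x hx) (hty.dropUntil hx), hsingle]
    have hspec := congrArg Walk.support ((tpath G hG u y).take_spec hx)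
    constructor
    · intro hv
      rw [htake] at hv
      exact (tpath G hG u y).support_takeUntil_subset hx hv
    · intro hv
      rw [← hspec, Walk.mem_support_append_iff, hdrop] at hv
      rcases hv with hv | hv
      · rw [htake]; exact hv
      · simp [Walk.support_cons, Walk.support_nil] at hv
        rcases hv with hv | hv
        · exact absurd hv hvx
        · exact absurd hv hvy
  · have h1 : (Walk.cons hxy (tpath G hG u y).reverse).IsPath := by
      rw [Walk.cons_isPath_iff]
      refine ⟨(tpath_isPath hG u y).reverse, ?_⟩
      rw [Walk.support_reverse, List.mem_reverse]; exact hx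
    have h2 : tpath G hG x u = Walk.cons hxy (tpath G hG u y).reverse := tpath_eq hG _ h1
    have h3 : tpath G hG u x = (tpath G hG x u).reverse :=
      tpath_eq hG _ (tpath_isPath hG x u).reverse
    rw [h3, h2, Walk.support_reverse, List.mem_reverse, Walk.support_cons]
    simp only [List.mem_cons, Walk.support_reverse, List.mem_reverse]
    constructor
    · rintro (h | h)
      · exact absurd h hvx
      · exact h
    · exact Or.inr

lemma parent_reroot {x y v : V} (hxy : G.Adj x y) (hvx : v ≠ x) (hvy : v ≠ y) :
    parent G hG x v = parent G hG y v := by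
  obtain ⟨hadj, -, hsupp⟩ := tpath_spec hG hvx
  have hs2 : v ∉ (tpath G hG (parent G hG x v) y).support :=
    fun hmem => hsupp ((mem_support_reroot hG hxy hvx hvy).mpr hmem)
  exact (parent_eq_of hG hadj hs2).symm


variable {R : Type} [Fintype R] [Fintype V]

lemma rootedPMF_adj (w : Sym2 V → ℝ) (pp : R → ℝ) {x y : V} (hxy : G.Adj x y) :
    rootedPMF G hG w pp x = rootedPMF G hG w pp y := by
  funext σ
  unfold rootedPMF
  have hpx : parent G hG x y = x :=
    parent_eq_of hG hxy.symm (by rw [tpath_self hG]; simp [hxy.ne'])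
  have hpy : parent G hG y x = y :=
    parent_eq_of hG hxy (by rw [tpath_self hG]; simp [hxy.ne])
  have hyx : y ∈ Finset.univ.erase x := Finset.mem_erase.2 ⟨hxy.ne', Finset.mem_univ _⟩
  have hxy' : x ∈ Finset.univ.erase y := Finset.mem_erase.2 ⟨hxy.ne, Finset.mem_univ _⟩
  rw [← Finset.mul_prod_erase _ _ hyx, ← Finset.mul_prod_erase _ _ hxy', ← mul_assoc, ← mul_assoc]
  have hset : (Finset.univ.erase x).erase y = (Finset.univ.erase y).erase x :=
    Finset.erase_right_comm
  congr 1
  · -- scalar parts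
    rw [hpx, hpy]
    have hsw : s(y, x) = s(x, y) := Sym2.eq_swap
    rw [hsw]
    by_cases h : σ x = σ y
    · rw [if_pos h.symm, if_pos h, h]
    · rw [if_neg (fun hh => h hh.symm), if_neg h]
      ring
  · rw [hset]
    refine Finset.prod_congr rfl (fun v hv => ?_)
    have hvx : v ≠ x := (Finset.mem_erase.1 hv).1
    have hvy : v ≠ y := (Finset.mem_erase.1 (Finset.mem_erase.1 hv).2).1
    rw [parent_reroot hG hxy hvx hvy]

lemma rootedPMF_walk (w : Sym2 V → ℝ) (pp : R → ℝ) :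
    ∀ {u v : V} (_ : G.Walk u v), rootedPMF G hG w pp u = rootedPMF G hG w pp v := by
  intro u v W
  induction W with
  | nil => rfl
  | cons h q ih => exact (rootedPMF_adj hG w pp h).trans ih

lemma rootedPMF_reroot (w : Sym2 V → ℝ) (pp : R → ℝ) (ρ a : V) :
    rootedPMF G hG w pp ρ = rootedPMF G hG w pp a :=
  (hG.isConnected.preconnected ρ a).elim (fun W => rootedPMF_walk hG w pp W)



-- distance along the parent chain
variable {V : Type} [DecidableEq V] {G : SimpleGraph V} (hG : G.IsTree) in
lemma adj_parent {ρ v : V} (h : v ≠ ρ) : G.Adj v (parent G hG ρ v) :=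
  (tpath_spec hG h).choose

variable {V : Type} [DecidableEq V] {G : SimpleGraph V} (hG : G.IsTree) in
lemma length_parent {ρ v : V} (h : v ≠ ρ) :
    (tpath G hG v ρ).length = (tpath G hG (parent G hG ρ v) ρ).length + 1 := by
  obtain ⟨hadj, he, -⟩ := tpath_spec hG h
  rw [he, Walk.length_cons]

variable {V : Type} [DecidableEq V] {G : SimpleGraph V} (hG : G.IsTree) in
lemma eq_root_of_length_zero {ρ v : V} (h : (tpath G hG v ρ).length = 0) : v = ρ :=
  Walk.eq_of_length_eq_zero h

variable {V : Type} [DecidableEq V] {G : SimpleGraph V} (hG : G.IsTree) in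
lemma tdist_eq_sum (w : Sym2 V → ℝ) (a : V) :
    ∀ (n : ℕ) (v : V), (tpath G hG v a).length = n →
    ((tpath G hG v a).edges.map w).sum
      = ∑ j ∈ Finset.range n,
          w (s((parent G hG a)^[j+1] v, (parent G hG a)^[j] v)) := by
  intro n
  induction n with
  | zero =>
    intro v hv
    have hva : v = a := eq_root_of_length_zero hG hv
    subst hva
    rw [tpath_self hG]
    simp
  | succ n ih =>
    intro v hv
    have hva : v ≠ a := by
      intro h; subst h; rw [tpath_self hG] at hv; simp at hv
    obtain ⟨hadj, he, -⟩ := tpath_spec hG hva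
    have hlen : (tpath G hG (parent G hG a v) a).length = n := by
      rw [he, Walk.length_cons] at hv; omega
    rw [he, Walk.edges_cons, List.map_cons, List.sum_cons,
      ih (parent G hG a v) hlen, Finset.sum_range_succ']
    have h0 : w s(v, parent G hG a v)
        = w (s((parent G hG a)^[0+1] v, (parent G hG a)^[0] v)) := by
      simp [Function.iterate_one, Sym2.eq_swap]
    have hsh : ∀ j, w (s((parent G hG a)^[j+1] (parent G hG a v),
          (parent G hG a)^[j] (parent G hG a v)))
        = w (s((parent G hG a)^[j+1+1] v, (parent G hG a)^[j+1] v)) := by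
      intro j
      rw [← Function.iterate_succ_apply, ← Function.iterate_succ_apply]
    rw [Finset.sum_congr rfl (fun j _ => hsh j)] at *
    rw [h0]
    ring

variable {V : Type} [DecidableEq V] {G : SimpleGraph V} (hG : G.IsTree) in
lemma tdist_symm (w : Sym2 V → ℝ) (u v : V) :
    tdist G hG w u v = tdist G hG w v u := by
  have h1 : tpath G hG u v = (tpath G hG v u).reverse :=
    tpath_eq hG _ (tpath_isPath hG v u).reverse
  unfold tdist
  rw [h1, Walk.edges_reverse, List.map_reverse, List.sum_reverse]


variable {R : Type} [Fintype R]

def Mmat (pp : R → ℝ) (θ : ℝ) (x y : R) : ℝ :=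
  θ * (if y = x then 1 else 0) + (1 - θ) * pp y

lemma Mmat_one (pp : R → ℝ) (x y : R) : Mmat pp 1 x y = if y = x then 1 else 0 := by
  unfold Mmat; ring

lemma Mmat_row_sum (pp : R → ℝ) (hppsum : ∑ x : R, pp x = 1) (θ : ℝ) (x : R) :
    ∑ y : R, Mmat pp θ x y = 1 := by
  unfold Mmat
  rw [Finset.sum_add_distrib, ← Finset.mul_sum, ← Finset.mul_sum, hppsum,
    Finset.sum_ite_eq' Finset.univ x (fun _ => (1:ℝ))]
  simp

lemma Mmat_comp (pp : R → ℝ) (hppsum : ∑ x : R, pp x = 1) (E θ : ℝ) (x z : R) :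
    ∑ y : R, Mmat pp E y x * Mmat pp θ z y = Mmat pp (E * θ) z x := by
  have expand : ∀ y : R, Mmat pp E y x * Mmat pp θ z y
      = (E * θ) * (if x = y then (if y = z then (1:ℝ) else 0) else 0)
        + (E * (1 - θ)) * (if x = y then pp y else 0)
        + ((1 - E) * θ * pp x) * (if y = z then 1 else 0)
        + ((1 - E) * (1 - θ) * pp x) * pp y := by
    intro y; unfold Mmat
    split_ifs <;> ring
  simp only [expand]
  rw [Finset.sum_add_distrib, Finset.sum_add_distrib, Finset.sum_add_distrib,
    ← Finset.mul_sum, ← Finset.mul_sum, ← Finset.mul_sum, ← Finset.mul_sum,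
    Finset.sum_ite_eq Finset.univ x (fun y => if y = z then (1:ℝ) else 0),
    Finset.sum_ite_eq Finset.univ x pp,
    Finset.sum_ite_eq' Finset.univ z (fun _ => (1:ℝ)), hppsum]
  simp only [Finset.mem_univ, if_true]
  unfold Mmat
  ring

/-- Core summation lemma: summing out one coordinate. -/
lemma core {V : Type} [Fintype V] [DecidableEq V] (v : V)
    (Gf : (V → R) → R → ℝ)
    (hGf : ∀ (σ : V → R) (x : R), Gf (Function.update σ v x) = Gf σ) :
    (Fintype.card R : ℝ) * ∑ σ : V → R, Gf σ (σ v) = ∑ σ : V → R, ∑ y : R, Gf σ y := by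
  have key : ∀ (y y' : R), ∑ σ : V → R, (if σ v = y' then Gf σ y else 0)
      = ∑ σ : V → R, (if σ v = y then Gf σ y else 0) := by
    intro y y'
    rw [← Finset.sum_filter, ← Finset.sum_filter]
    refine Finset.sum_nbij' (fun σ => Function.update σ v y)
      (fun σ => Function.update σ v y') ?_ ?_ ?_ ?_ ?_
    · intro σ hσ
      simp only [Finset.mem_filter, Finset.mem_univ, true_and] at *
      simp [Function.update_self]
    · intro σ hσ
      simp only [Finset.mem_filter, Finset.mem_univ, true_and] at *
      simp [Function.update_self]
    · intro σ hσ
      simp only [Finset.mem_filter, Finset.mem_univ, true_and] at hσ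
      show Function.update (Function.update σ v y) v y' = σ
      rw [Function.update_idem, ← hσ, Function.update_eq_self]
    · intro σ hσ
      simp only [Finset.mem_filter, Finset.mem_univ, true_and] at hσ
      show Function.update (Function.update σ v y') v y = σ
      rw [Function.update_idem, ← hσ, Function.update_eq_self]
    · intro σ hσ
      show Gf σ y = Gf (Function.update σ v y) y
      rw [hGf]
  have fiber : ∀ y : R, ∑ σ : V → R, Gf σ y
      = (Fintype.card R : ℝ) * ∑ σ : V → R, (if σ v = y then Gf σ y else 0) := by
    intro y
    have h1 : ∀ σ : V → R, Gf σ y = ∑ y' : R, (if σ v = y' then Gf σ y else 0) := by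
      intro σ
      rw [Finset.sum_ite_eq Finset.univ (σ v) (fun _ => Gf σ y)]
      simp
    calc ∑ σ : V → R, Gf σ y = ∑ σ : V → R, ∑ y' : R, (if σ v = y' then Gf σ y else 0) :=
            Finset.sum_congr rfl (fun σ _ => h1 σ)
      _ = ∑ y' : R, ∑ σ : V → R, (if σ v = y' then Gf σ y else 0) := Finset.sum_comm
      _ = ∑ _y' : R, ∑ σ : V → R, (if σ v = y then Gf σ y else 0) :=
            Finset.sum_congr rfl (fun y' _ => key y y')
      _ = (Fintype.card R : ℝ) * ∑ σ : V → R, (if σ v = y then Gf σ y else 0) := by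
            rw [Finset.sum_const, Finset.card_univ, nsmul_eq_mul]
  have lhs1 : ∀ σ : V → R, Gf σ (σ v) = ∑ y : R, (if σ v = y then Gf σ y else 0) := by
    intro σ
    rw [Finset.sum_ite_eq Finset.univ (σ v) (fun y => Gf σ y)]
    simp
  calc (Fintype.card R : ℝ) * ∑ σ : V → R, Gf σ (σ v)
      = (Fintype.card R : ℝ) * ∑ σ : V → R, ∑ y : R, (if σ v = y then Gf σ y else 0) := by
        rw [Finset.sum_congr rfl (fun σ _ => lhs1 σ)]
    _ = (Fintype.card R : ℝ) * ∑ y : R, ∑ σ : V → R, (if σ v = y then Gf σ y else 0) := by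
        rw [Finset.sum_comm]
    _ = ∑ y : R, (Fintype.card R : ℝ) * ∑ σ : V → R, (if σ v = y then Gf σ y else 0) := by
        rw [Finset.mul_sum]
    _ = ∑ y : R, ∑ σ : V → R, Gf σ y := Finset.sum_congr rfl (fun y _ => (fiber y).symm)
    _ = ∑ σ : V → R, ∑ y : R, Gf σ y := Finset.sum_comm

lemma sum_coord {V : Type} [Fintype V] [DecidableEq V] (hV : Nonempty V)
    (hR : 0 < Fintype.card R) (a : V) (H : R → ℝ) :
    ∑ σ : V → R, H (σ a) = (Fintype.card R : ℝ) ^ (Fintype.card V - 1) * ∑ x : R, H x := by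
  have h0 := core a (fun _ y => H y) (fun σ x => rfl)
  have h1 : ∑ σ : V → R, ∑ y : R, H y
      = (Fintype.card R : ℝ) ^ (Fintype.card V) * ∑ x : R, H x := by
    rw [Finset.sum_const, Finset.card_univ, nsmul_eq_mul, Fintype.card_fun]
    push_cast
    ring
  have hcV : 1 ≤ Fintype.card V := Fintype.card_pos_iff.2 hV
  have hsplit : (Fintype.card R : ℝ) ^ (Fintype.card V)
      = (Fintype.card R : ℝ) * (Fintype.card R : ℝ) ^ (Fintype.card V - 1) := by
    rw [← pow_succ']
    congr 1
    omega
  have hRne : (Fintype.card R : ℝ) ≠ 0 := by positivity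
  apply mul_left_cancel₀ hRne
  rw [h0, h1, hsplit]
  ring


/-- Stage 1: summing out all vertices in `t` (a set closed under taking children,
avoiding `a` and `b`) multiplies the partition-function-style sum by `card R`
for each vertex removed. -/
lemma stage1 {V : Type} [Fintype V] [DecidableEq V]
    (pp : R → ℝ) (hppsum : ∑ x : R, pp x = 1)
    (a b : V) (p : V → V) (D : V → ℕ) (hDp : ∀ v, v ≠ a → D (p v) < D v)
    (θ : V → ℝ) :
    ∀ (n : ℕ) (t : Finset V), t.card = n → (∀ u, p u ∈ t → u ∈ t) → a ∉ t → b ∉ t →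
    ∑ σ : V → R, (if σ a = σ b then (1:ℝ) else 0) *
        (pp (σ a) * ∏ v ∈ Finset.univ.erase a \ t, Mmat pp (θ v) (σ (p v)) (σ v))
    = (Fintype.card R : ℝ) ^ t.card *
      ∑ σ : V → R, (if σ a = σ b then (1:ℝ) else 0) *
        (pp (σ a) * ∏ v ∈ Finset.univ.erase a, Mmat pp (θ v) (σ (p v)) (σ v)) := by
  intro n
  induction n with
  | zero =>
    intro t ht _ _ _
    rw [Finset.card_eq_zero] at ht
    subst ht
    simp
  | succ n ih =>
    intro t ht hcl hta htb
    have htne : t.Nonempty := Finset.card_pos.1 (by omega)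
    obtain ⟨v, hvt, hvmin⟩ := Finset.exists_min_image t D htne
    have hva : v ≠ a := fun h => hta (h ▸ hvt)
    have hvb : v ≠ b := fun h => htb (h ▸ hvt)
    have hpvv : p v ≠ v := fun h => absurd (h ▸ hDp v hva) (lt_irrefl _)
    set t' := t.erase v with ht'
    have ht'c : t'.card = n := by rw [ht', Finset.card_erase_of_mem hvt]; omega
    have hcl' : ∀ u, p u ∈ t' → u ∈ t' := by
      intro u hu
      have hut : u ∈ t := hcl u (Finset.mem_of_mem_erase hu)
      refine Finset.mem_erase.2 ⟨?_, hut⟩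
      intro hue
      have hpv : p v ∈ t := Finset.mem_of_mem_erase (hue ▸ hu)
      exact absurd (hvmin (p v) hpv) (not_le.2 (hDp v hva))
    have hta' : a ∉ t' := fun h => hta (Finset.mem_of_mem_erase h)
    have htb' : b ∉ t' := fun h => htb (Finset.mem_of_mem_erase h)
    set S := Finset.univ.erase a \ t with hS
    have hvS : v ∉ S := fun h => (Finset.mem_sdiff.1 h).2 hvt
    have hins : Finset.univ.erase a \ t' = insert v S := by
      ext u
      simp only [hS, ht', Finset.mem_sdiff, Finset.mem_erase, Finset.mem_insert,
        Finset.mem_univ, and_true, true_and]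
      constructor
      · rintro ⟨hua, hu⟩
        by_cases huv : u = v
        · exact Or.inl huv
        · exact Or.inr ⟨hua, fun hut => hu ⟨huv, hut⟩⟩
      · rintro (rfl | ⟨hua, hut⟩)
        · exact ⟨hva, fun hh => hh.1 rfl⟩
        · exact ⟨hua, fun hh => hut hh.2⟩
    -- the elimination step
    set Gf : (V → R) → R → ℝ := fun σ y =>
      (if σ a = σ b then (1:ℝ) else 0) *
        (pp (σ a) * ((∏ v' ∈ S, Mmat pp (θ v') (σ (p v')) (σ v')) *
          Mmat pp (θ v) (σ (p v)) y)) with hGfdef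
    have hGf : ∀ (σ : V → R) (x : R), Gf (Function.update σ v x) = Gf σ := by
      intro σ x
      have ha' : Function.update σ v x a = σ a := Function.update_of_ne (Ne.symm hva) x σ
      have hb' : Function.update σ v x b = σ b := Function.update_of_ne (Ne.symm hvb) x σ
      have hpv' : Function.update σ v x (p v) = σ (p v) := Function.update_of_ne hpvv x σ
      have hprod : (∏ v' ∈ S, Mmat pp (θ v') (Function.update σ v x (p v'))
            (Function.update σ v x v')) = ∏ v' ∈ S, Mmat pp (θ v') (σ (p v')) (σ v') := by
        refine Finset.prod_congr rfl (fun v' hv' => ?_)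
        have h1 : v' ≠ v := fun h => hvS (h ▸ hv')
        have h2 : p v' ≠ v := by
          intro h
          have hvt' : v' ∈ t := hcl v' (h.symm ▸ hvt)
          exact (Finset.mem_sdiff.1 hv').2 hvt'
        rw [Function.update_of_ne h1, Function.update_of_ne h2]
      funext y
      simp only [hGfdef, ha', hb', hpv', hprod]
    have hcore := core v Gf hGf
    have hL : ∑ σ : V → R, (if σ a = σ b then (1:ℝ) else 0) *
          (pp (σ a) * ∏ v' ∈ Finset.univ.erase a \ t', Mmat pp (θ v') (σ (p v')) (σ v'))
        = ∑ σ : V → R, Gf σ (σ v) := by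
      refine Finset.sum_congr rfl (fun σ _ => ?_)
      rw [hins, Finset.prod_insert hvS]
      simp only [hGfdef]
      ring
    have hR : ∑ σ : V → R, ∑ y : R, Gf σ y
        = ∑ σ : V → R, (if σ a = σ b then (1:ℝ) else 0) *
            (pp (σ a) * ∏ v' ∈ S, Mmat pp (θ v') (σ (p v')) (σ v')) := by
      refine Finset.sum_congr rfl (fun σ _ => ?_)
      simp only [hGfdef]
      rw [← Finset.mul_sum, ← Finset.mul_sum, ← Finset.mul_sum,
        Mmat_row_sum pp hppsum, mul_one]
    have hih := ih t' ht'c hcl' hta' htb'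
    calc ∑ σ : V → R, (if σ a = σ b then (1:ℝ) else 0) *
          (pp (σ a) * ∏ v' ∈ Finset.univ.erase a \ t, Mmat pp (θ v') (σ (p v')) (σ v'))
        = ∑ σ : V → R, ∑ y : R, Gf σ y := hR.symm
      _ = (Fintype.card R : ℝ) * ∑ σ : V → R, Gf σ (σ v) := hcore.symm
      _ = (Fintype.card R : ℝ) * ∑ σ : V → R, (if σ a = σ b then (1:ℝ) else 0) *
            (pp (σ a) * ∏ v' ∈ Finset.univ.erase a \ t', Mmat pp (θ v') (σ (p v')) (σ v')) := by
          rw [hL]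
      _ = (Fintype.card R : ℝ) * ((Fintype.card R : ℝ) ^ t'.card *
            ∑ σ : V → R, (if σ a = σ b then (1:ℝ) else 0) *
              (pp (σ a) * ∏ v' ∈ Finset.univ.erase a, Mmat pp (θ v') (σ (p v')) (σ v'))) := by
          rw [hih]
      _ = (Fintype.card R : ℝ) ^ t.card *
            ∑ σ : V → R, (if σ a = σ b then (1:ℝ) else 0) *
              (pp (σ a) * ∏ v' ∈ Finset.univ.erase a, Mmat pp (θ v') (σ (p v')) (σ v')) := by
          rw [ht'c, ht, pow_succ]
          ring

/-- Stage 2: collapsing the chain from `b = c 0` up to `a = c K`. -/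
lemma stage2 {V : Type} [Fintype V] [DecidableEq V]
    (pp : R → ℝ) (hppsum : ∑ x : R, pp x = 1)
    (a : V) (c : ℕ → V) (K : ℕ) (hcK : c K = a)
    (hinj : ∀ j ≤ K, ∀ k ≤ K, c j = c k → j = k)
    (θ : ℕ → ℝ) :
    ∀ k ≤ K,
    ∑ σ : V → R, pp (σ a) * Mmat pp (∏ j ∈ Finset.range k, θ j) (σ (c k)) (σ a) *
        ∏ j ∈ Finset.Ico k K, Mmat pp (θ j) (σ (c (j+1))) (σ (c j))
    = (Fintype.card R : ℝ) ^ k *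
      ∑ σ : V → R, pp (σ a) * Mmat pp (∏ j ∈ Finset.range 0, θ j) (σ (c 0)) (σ a) *
        ∏ j ∈ Finset.Ico 0 K, Mmat pp (θ j) (σ (c (j+1))) (σ (c j)) := by
  intro k
  induction k with
  | zero => intro _; rw [pow_zero, one_mul]
  | succ k ih =>
    intro hk1
    have hkK : k < K := hk1
    have hne : ∀ j, j ≤ K → j ≠ k → c j ≠ c k := by
      intro j hj hjk h
      exact hjk (hinj j hj k (le_of_lt hkK) h)
    have hack : a ≠ c k := hcK ▸ hne K le_rfl (by omega)
    have hck1 : c (k+1) ≠ c k := hne (k+1) hk1 (by omega)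
    set Gf : (V → R) → R → ℝ := fun σ y =>
      pp (σ a) * (∏ j ∈ Finset.Ico (k+1) K, Mmat pp (θ j) (σ (c (j+1))) (σ (c j))) *
        (Mmat pp (∏ j ∈ Finset.range k, θ j) y (σ a) * Mmat pp (θ k) (σ (c (k+1))) y)
      with hGfdef
    have hGf : ∀ (σ : V → R) (x : R), Gf (Function.update σ (c k) x) = Gf σ := by
      intro σ x
      have ha' : Function.update σ (c k) x a = σ a := Function.update_of_ne hack x σ
      have hc1' : Function.update σ (c k) x (c (k+1)) = σ (c (k+1)) :=
        Function.update_of_ne hck1 x σ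
      have hprod : (∏ j ∈ Finset.Ico (k+1) K,
            Mmat pp (θ j) (Function.update σ (c k) x (c (j+1)))
              (Function.update σ (c k) x (c j)))
          = ∏ j ∈ Finset.Ico (k+1) K, Mmat pp (θ j) (σ (c (j+1))) (σ (c j)) := by
        refine Finset.prod_congr rfl (fun j hj => ?_)
        have hjmem := Finset.mem_Ico.1 hj
        have h1 : c j ≠ c k := hne j (le_of_lt hjmem.2) (by omega)
        have h2 : c (j+1) ≠ c k := hne (j+1) hjmem.2 (by omega)
        rw [Function.update_of_ne h1, Function.update_of_ne h2]
      funext y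
      simp only [hGfdef, ha', hc1', hprod]
    have hcore := core (c k) Gf hGf
    have hL : ∑ σ : V → R, pp (σ a) *
          Mmat pp (∏ j ∈ Finset.range k, θ j) (σ (c k)) (σ a) *
          ∏ j ∈ Finset.Ico k K, Mmat pp (θ j) (σ (c (j+1))) (σ (c j))
        = ∑ σ : V → R, Gf σ (σ (c k)) := by
      refine Finset.sum_congr rfl (fun σ _ => ?_)
      rw [Finset.prod_eq_prod_Ico_succ_bot hkK]
      simp only [hGfdef]
      ring
    have hR : ∑ σ : V → R, ∑ y : R, Gf σ y
        = ∑ σ : V → R, pp (σ a) *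
            Mmat pp (∏ j ∈ Finset.range (k+1), θ j) (σ (c (k+1))) (σ a) *
            ∏ j ∈ Finset.Ico (k+1) K, Mmat pp (θ j) (σ (c (j+1))) (σ (c j)) := by
      refine Finset.sum_congr rfl (fun σ _ => ?_)
      simp only [hGfdef]
      rw [← Finset.mul_sum,
        Mmat_comp pp hppsum (∏ j ∈ Finset.range k, θ j) (θ k) (σ a) (σ (c (k+1))),
        ← Finset.prod_range_succ]
      ring
    have hih := ih (le_of_lt hkK)
    calc ∑ σ : V → R, pp (σ a) *
          Mmat pp (∏ j ∈ Finset.range (k+1), θ j) (σ (c (k+1))) (σ a) *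
          ∏ j ∈ Finset.Ico (k+1) K, Mmat pp (θ j) (σ (c (j+1))) (σ (c j))
        = ∑ σ : V → R, ∑ y : R, Gf σ y := hR.symm
      _ = (Fintype.card R : ℝ) * ∑ σ : V → R, Gf σ (σ (c k)) := hcore.symm
      _ = (Fintype.card R : ℝ) * ((Fintype.card R : ℝ) ^ k *
            ∑ σ : V → R, pp (σ a) * Mmat pp (∏ j ∈ Finset.range 0, θ j) (σ (c 0)) (σ a) *
              ∏ j ∈ Finset.Ico 0 K, Mmat pp (θ j) (σ (c (j+1))) (σ (c j))) := by
          rw [← hL, hih]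
      _ = (Fintype.card R : ℝ) ^ (k+1) *
            ∑ σ : V → R, pp (σ a) * Mmat pp (∏ j ∈ Finset.range 0, θ j) (σ (c 0)) (σ a) *
              ∏ j ∈ Finset.Ico 0 K, Mmat pp (θ j) (σ (c (j+1))) (σ (c j)) := by
          rw [pow_succ]
          ring


end RASProof

/-- On a finite weighted tree carrying the Markov model with
root distribution `pp` and the transition matrices `M(e)` applied along edges
directed away from the root, for any two leaves `a, b` one has
`P[σ_a = σ_b] = q_∞ + p_∞ e^{-d(a,b)}`, where `q_∞ = Σ_x pp_x²`, `p_∞ = 1 - q_∞`. -/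
theorem agreement_probability
    {V : Type} [Fintype V] [DecidableEq V] (G : SimpleGraph V) (hG : G.IsTree)
    (w : Sym2 V → ℝ) (hw : ∀ e ∈ G.edgeSet, 0 < w e)
    {R : Type} [Fintype R] (r : ℕ) (hR : Fintype.card R = r)
    (pp : R → ℝ) (hpp : ∀ x, 0 ≤ pp x) (hppsum : ∑ x : R, pp x = 1)
    (ρ : V) (a b : V) (ha : RAS.IsLeaf G a) (hb : RAS.IsLeaf G b) :
    RAS.fprob (RAS.rootedPMF G hG w pp ρ) {σ : V → R | σ a = σ b} =
      (∑ x : R, (pp x) ^ 2) +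
        (1 - ∑ x : R, (pp x) ^ 2) * Real.exp (-(RAS.tdist G hG w a b)) := by
  classical
  have hRne : Nonempty R := by
    by_contra h
    rw [not_nonempty_iff] at h
    rw [Finset.univ_eq_empty, Finset.sum_empty] at hppsum
    exact one_ne_zero hppsum.symm
  have hrpos : 0 < Fintype.card R := Fintype.card_pos_iff.2 hRne
  have hV : Nonempty V := hG.isConnected.nonempty
  have hroot := RASProof.rootedPMF_reroot hG w pp ρ a
  rw [hroot]
  -- abbreviations
  set P : V → V := RAS.parent G hG a with hP
  set Θ : V → ℝ := fun v => Real.exp (-(w s(RAS.parent G hG a v, v))) with hΘ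
  set c : ℕ → V := fun k => (RAS.parent G hG a)^[k] b with hc
  set K : ℕ := (RAS.tpath G hG b a).length with hK
  set D : V → ℕ := fun v => (RAS.tpath G hG v a).length with hDdef
  set θn : ℕ → ℝ := fun j => Real.exp (-(w s(c (j+1), c j))) with hθn
  have hDa : D a = 0 := by rw [hDdef]; simp only []; rw [RASProof.tpath_self hG]; rfl
  have hDp : ∀ v, v ≠ a → D (P v) < D v := by
    intro v hv
    have := RASProof.length_parent hG hv
    simp only [hDdef, hP]
    omega
  have hDiter : ∀ k, k ≤ K → D (c k) = K - k := by
    intro k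
    induction k with
    | zero => intro _; simp [hc, hDdef, hK]
    | succ k ih =>
      intro hk
      have hkK : k < K := hk
      have hDk := ih (le_of_lt hkK)
      have hne : c k ≠ a := by
        intro h
        rw [h, hDa] at hDk
        omega
      have hstep : c (k+1) = P (c k) := by
        simp only [hc, hP, Function.iterate_succ_apply']
      have := RASProof.length_parent hG hne (ρ := a)
      have h2 : D (c k) = D (P (c k)) + 1 := by
        simp only [hDdef, hP]; exact this
      rw [hstep]
      omega
  have hcK : c K = a := by
    have h0 : D (c K) = 0 := by rw [hDiter K le_rfl]; omega
    exact RASProof.eq_root_of_length_zero hG h0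
  have hinj : ∀ j ≤ K, ∀ k ≤ K, c j = c k → j = k := by
    intro j hj k hk h
    have h1 := hDiter j hj
    have h2 := hDiter k hk
    rw [h] at h1
    omega
  -- the pmf in matrix form
  have hpmf : ∀ σ : V → R, RAS.rootedPMF G hG w pp a σ
      = pp (σ a) * ∏ v ∈ Finset.univ.erase a,
          RASProof.Mmat pp (Θ v) (σ (RAS.parent G hG a v)) (σ v) := by
    intro σ
    unfold RAS.rootedPMF
    congr 1
    refine Finset.prod_congr rfl (fun v _ => ?_)
    unfold RASProof.Mmat
    simp only [hΘ]
    by_cases h : σ v = σ (RAS.parent G hG a v)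
    · rw [if_pos h, if_pos h]; ring
    · rw [if_neg h, if_neg h]; ring
  have hsum0 : RAS.fprob (RAS.rootedPMF G hG w pp a) {σ : V → R | σ a = σ b}
      = ∑ σ : V → R, (if σ a = σ b then (1:ℝ) else 0) *
          (pp (σ a) * ∏ v ∈ Finset.univ.erase a,
            RASProof.Mmat pp (Θ v) (σ (RAS.parent G hG a v)) (σ v)) := by
    unfold RAS.fprob
    refine Finset.sum_congr rfl (fun σ _ => ?_)
    simp only [Set.mem_setOf_eq]
    by_cases h : σ a = σ b
    · rw [if_pos h, if_pos h, one_mul, hpmf σ]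
    · rw [if_neg h, if_neg h, zero_mul]
  set F : ℝ := ∑ σ : V → R, (if σ a = σ b then (1:ℝ) else 0) *
      (pp (σ a) * ∏ v ∈ Finset.univ.erase a,
        RASProof.Mmat pp (Θ v) (σ (RAS.parent G hG a v)) (σ v)) with hF
  -- the chain and its complement
  set Ch : Finset V := Finset.image c (Finset.range (K+1)) with hCh
  set tm : Finset V := Finset.univ \ Ch with htm
  have haCh : a ∈ Ch := by
    rw [hCh, Finset.mem_image]
    exact ⟨K, Finset.mem_range.2 (by omega), hcK⟩
  have hbCh : b ∈ Ch := by
    rw [hCh, Finset.mem_image]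
    exact ⟨0, Finset.mem_range.2 (by omega), rfl⟩
  have hclosed : ∀ u, P u ∈ tm → u ∈ tm := by
    intro u hu
    rw [htm, Finset.mem_sdiff] at hu ⊢
    refine ⟨Finset.mem_univ _, fun huCh => hu.2 ?_⟩
    rw [hCh, Finset.mem_image] at huCh ⊢
    obtain ⟨k, hk, rfl⟩ := huCh
    rw [Finset.mem_range] at hk
    by_cases hkK : k = K
    · subst hkK
      rw [hcK]
      refine ⟨K, Finset.mem_range.2 (by omega), ?_⟩
      rw [hcK, hP, RASProof.parent_self hG]
    · refine ⟨k+1, Finset.mem_range.2 (by omega), ?_⟩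
      simp only [hc, hP, Function.iterate_succ_apply']
  have hta : a ∉ tm := by rw [htm, Finset.mem_sdiff]; exact fun h => h.2 haCh
  have htb : b ∉ tm := by rw [htm, Finset.mem_sdiff]; exact fun h => h.2 hbCh
  -- identify the reduced index set with the chain
  have hSset : Finset.univ.erase a \ tm = Finset.image c (Finset.range K) := by
    ext u
    constructor
    · intro hu
      have h1 := (Finset.mem_sdiff.1 hu).1
      have h2 := (Finset.mem_sdiff.1 hu).2
      have hua : u ≠ a := (Finset.mem_erase.1 h1).1
      have huCh : u ∈ Ch := by
        by_contra h3
        exact h2 (Finset.mem_sdiff.2 ⟨Finset.mem_univ _, h3⟩)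
      rw [hCh, Finset.mem_image] at huCh
      obtain ⟨k, hk, rfl⟩ := huCh
      rw [Finset.mem_range] at hk
      have hkK : k ≠ K := fun h => hua (h ▸ hcK)
      exact Finset.mem_image.2 ⟨k, Finset.mem_range.2 (by omega), rfl⟩
    · intro hu
      obtain ⟨k, hk, rfl⟩ := Finset.mem_image.1 hu
      rw [Finset.mem_range] at hk
      have hne : c k ≠ a := by
        intro h
        have := hinj k (by omega) K le_rfl (h.trans hcK.symm)
        omega
      refine Finset.mem_sdiff.2 ⟨Finset.mem_erase.2 ⟨hne, Finset.mem_univ _⟩, ?_⟩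
      intro h2
      refine (Finset.mem_sdiff.1 h2).2 ?_
      rw [hCh]
      exact Finset.mem_image.2 ⟨k, Finset.mem_range.2 (by omega), rfl⟩
  have hinjOn : ∀ x ∈ Finset.range K, ∀ y ∈ Finset.range K, c x = c y → x = y := by
    intro x hx y hy h
    rw [Finset.mem_range] at hx hy
    exact hinj x (by omega) y (by omega) h
  have hstage1 := RASProof.stage1 pp hppsum a b (RAS.parent G hG a) D hDp Θ tm.card tm rfl
    hclosed hta htb
  have hSum_tm : ∑ σ : V → R, (if σ a = σ b then (1:ℝ) else 0) *
        (pp (σ a) * ∏ v ∈ Finset.univ.erase a \ tm,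
          RASProof.Mmat pp (Θ v) (σ (RAS.parent G hG a v)) (σ v))
      = ∑ σ : V → R, pp (σ a) *
          RASProof.Mmat pp (∏ j ∈ Finset.range 0, θn j) (σ (c 0)) (σ a) *
          ∏ j ∈ Finset.Ico 0 K, RASProof.Mmat pp (θn j) (σ (c (j+1))) (σ (c j)) := by
    refine Finset.sum_congr rfl (fun σ _ => ?_)
    rw [hSset, Finset.prod_image hinjOn]
    have hfac : ∀ j ∈ Finset.range K,
        RASProof.Mmat pp (Θ (c j)) (σ (RAS.parent G hG a (c j))) (σ (c j))
          = RASProof.Mmat pp (θn j) (σ (c (j+1))) (σ (c j)) := by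
      intro j _
      have hstep : RAS.parent G hG a (c j) = c (j+1) := by
        simp only [hc, Function.iterate_succ_apply']
      simp only [hΘ, hθn]
      rw [hstep]
    rw [Finset.prod_congr rfl hfac, Finset.prod_range_zero,
      RASProof.Mmat_one pp (σ (c 0)) (σ a)]
    have hc0 : c 0 = b := rfl
    rw [hc0, ← Finset.range_eq_Ico]
    ring
  have hstage2 := RASProof.stage2 pp hppsum a c K hcK hinj θn K le_rfl
  -- compute B K
  set E : ℝ := ∏ j ∈ Finset.range K, θn j with hE
  set Q : ℝ := ∑ x : R, (pp x) ^ 2 with hQ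
  have hBK : ∑ σ : V → R, pp (σ a) * RASProof.Mmat pp E (σ (c K)) (σ a) *
        ∏ j ∈ Finset.Ico K K, RASProof.Mmat pp (θn j) (σ (c (j+1))) (σ (c j))
      = (Fintype.card R : ℝ) ^ (Fintype.card V - 1) * (Q + (1 - Q) * E) := by
    have h1 : ∀ σ : V → R, pp (σ a) * RASProof.Mmat pp E (σ (c K)) (σ a) *
          ∏ j ∈ Finset.Ico K K, RASProof.Mmat pp (θn j) (σ (c (j+1))) (σ (c j))
        = pp (σ a) * RASProof.Mmat pp E (σ a) (σ a) := by
      intro σ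
      rw [Finset.Ico_self, Finset.prod_empty, mul_one, hcK]
    rw [Finset.sum_congr rfl (fun σ _ => h1 σ),
      RASProof.sum_coord hV hrpos a (fun x => pp x * RASProof.Mmat pp E x x)]
    congr 1
    have h2 : ∀ x : R, pp x * RASProof.Mmat pp E x x
        = E * pp x + (1 - E) * (pp x) ^ 2 := by
      intro x
      unfold RASProof.Mmat
      rw [if_pos rfl]
      ring
    rw [Finset.sum_congr rfl (fun x _ => h2 x), Finset.sum_add_distrib,
      ← Finset.mul_sum, ← Finset.mul_sum, hppsum, hQ]
    ring
  have hEexp : E = Real.exp (-(RAS.tdist G hG w a b)) := by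
    have ht1 : RAS.tdist G hG w b a = ∑ j ∈ Finset.range K, w (s(c (j+1), c j)) := by
      have h := RASProof.tdist_eq_sum hG w a K b rfl
      unfold RAS.tdist
      rw [h]
    rw [RASProof.tdist_symm hG w a b, ht1, hE]
    rw [← Finset.sum_neg_distrib, Real.exp_sum]
  -- cardinalities
  have hChcard : Ch.card = K + 1 := by
    rw [hCh, Finset.card_image_of_injOn, Finset.card_range]
    intro x hx y hy h
    rw [Finset.mem_coe, Finset.mem_range] at hx hy
    exact hinj x (by omega) y (by omega) h
  have htmcard : tm.card = Fintype.card V - Ch.card := by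
    rw [htm, Finset.card_univ_diff]
  have hKV : K + 1 ≤ Fintype.card V := by
    rw [← hChcard]
    exact Finset.card_le_univ Ch
  have hexp : K + tm.card = Fintype.card V - 1 := by
    rw [htmcard, hChcard]
    omega
  -- final cancellation
  have hrne : (Fintype.card R : ℝ) ≠ 0 := by positivity
  have hchain : (Fintype.card R : ℝ) ^ (Fintype.card V - 1) * F
      = (Fintype.card R : ℝ) ^ (Fintype.card V - 1) * (Q + (1 - Q) * E) := by
    calc (Fintype.card R : ℝ) ^ (Fintype.card V - 1) * F
        = (Fintype.card R : ℝ) ^ K * ((Fintype.card R : ℝ) ^ tm.card * F) := by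
          rw [← mul_assoc, ← pow_add, hexp]
      _ = (Fintype.card R : ℝ) ^ K * (∑ σ : V → R, pp (σ a) *
            RASProof.Mmat pp (∏ j ∈ Finset.range 0, θn j) (σ (c 0)) (σ a) *
            ∏ j ∈ Finset.Ico 0 K, RASProof.Mmat pp (θn j) (σ (c (j+1))) (σ (c j))) := by
          rw [hF, ← hstage1, hSum_tm]
      _ = ∑ σ : V → R, pp (σ a) * RASProof.Mmat pp E (σ (c K)) (σ a) *
            ∏ j ∈ Finset.Ico K K, RASProof.Mmat pp (θn j) (σ (c (j+1))) (σ (c j)) := by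
          rw [← hstage2]
      _ = (Fintype.card R : ℝ) ^ (Fintype.card V - 1) * (Q + (1 - Q) * E) := hBK
  have hfinal : F = Q + (1 - Q) * E :=
    mul_left_cancel₀ (pow_ne_zero _ hrne) hchain
  rw [hsum0, hfinal, hEexp]
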